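/- Let p be an odd prime and let α, α' ∈ p ℤ_p be nonzero elements such that α⁻¹ − (α')⁻¹ ∈ ℤ_p (the inverses being taken in ℚ_p). Then there exists a unit u ∈ ℤ_p^× such that α' = α u². -/

import Mathlib

/-- Let `p` be an odd prime and `α, α' ∈ pℤ_p` nonzero with
`α⁻¹ - (α')⁻¹ ∈ ℤ_p` (inverses in `ℚ_p`). Then `α' = α u²` for some unit `u ∈ ℤ_p^×`. -/
theorem stmt_3 {p : ℕ} [Fact p.Prime] (hp : Odd p) (α α' : ℤ_[p])
    (hα : α ≠ 0) (hα' : α' ≠ 0)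
    (hαp : (p : ℤ_[p]) ∣ α) (hα'p : (p : ℤ_[p]) ∣ α')
    (h : ‖((α : ℚ_[p]))⁻¹ - ((α' : ℚ_[p]))⁻¹‖ ≤ 1) :
    ∃ u : ℤ_[p]ˣ, α' = α * (u : ℤ_[p]) ^ 2 := by
  have hpprime := (Fact.out : p.Prime)
  set a : ℚ_[p] := (α : ℚ_[p]) with ha_def
  set b : ℚ_[p] := (α' : ℚ_[p]) with hb_def
  have ha0 : a ≠ 0 := by exact_mod_cast PadicInt.coe_ne_zero.mpr hα
  have hb0 : b ≠ 0 := by exact_mod_cast PadicInt.coe_ne_zero.mpr hα'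
  have hpinv : (p : ℝ)⁻¹ < 1 := by
    rw [inv_lt_one_iff₀]
    right; exact_mod_cast hpprime.one_lt
  have hdvd_norm : ∀ x : ℤ_[p], (p : ℤ_[p]) ∣ x → ‖(x : ℚ_[p])‖ ≤ (p : ℝ)⁻¹ := by
    rintro x ⟨c, rfl⟩
    rw [PadicInt.padic_norm_e_of_padicInt, norm_mul, PadicInt.norm_p]
    calc (p : ℝ)⁻¹ * ‖c‖ ≤ (p : ℝ)⁻¹ * 1 := by
          gcongr; exact PadicInt.norm_le_one c
      _ = (p : ℝ)⁻¹ := mul_one _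
  have hna : ‖a‖ ≤ (p : ℝ)⁻¹ := hdvd_norm α hαp
  have hnb : ‖b‖ ≤ (p : ℝ)⁻¹ := hdvd_norm α' hα'p
  have hna1 : ‖a‖ < 1 := lt_of_le_of_lt hna hpinv
  have hnb1 : ‖b‖ < 1 := lt_of_le_of_lt hnb hpinv
  have hapos : 0 < ‖a‖ := norm_pos_iff.mpr ha0
  have hbpos : 0 < ‖b‖ := norm_pos_iff.mpr hb0
  -- key inequality : ‖b - a‖ ≤ ‖a‖ * ‖b‖
  have hkey : ‖b - a‖ ≤ ‖a‖ * ‖b‖ := by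
    have heq : b - a = (a⁻¹ - b⁻¹) * (a * b) := by field_simp
    calc ‖b - a‖ = ‖a⁻¹ - b⁻¹‖ * (‖a‖ * ‖b‖) := by rw [heq, norm_mul, norm_mul]
      _ ≤ 1 * (‖a‖ * ‖b‖) := by gcongr
      _ = ‖a‖ * ‖b‖ := one_mul _
  -- ‖a‖ = ‖b‖
  have hnorm_eq : ‖a‖ = ‖b‖ := by
    rcases lt_trichotomy ‖a‖ ‖b‖ with hlt | heq | hgt
    · exfalso
      have h1 : ‖b - a‖ < ‖b‖ := lt_of_le_of_lt hkey (by nlinarith)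
      have h2 : ‖b‖ ≤ max ‖a‖ ‖b - a‖ := by
        calc ‖b‖ = ‖a + (b - a)‖ := by ring_nf
          _ ≤ max ‖a‖ ‖b - a‖ := Padic.nonarchimedean _ _
      rcases max_cases ‖a‖ ‖b - a‖ with ⟨hm, _⟩ | ⟨hm, _⟩ <;> rw [hm] at h2 <;> linarith
    · exact heq
    · exfalso
      have h1 : ‖b - a‖ < ‖a‖ := lt_of_le_of_lt hkey (by nlinarith)
      have h2 : ‖a‖ ≤ max ‖b‖ ‖b - a‖ := by
        calc ‖a‖ = ‖b + -(b - a)‖ := by ring_nf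
          _ ≤ max ‖b‖ ‖-(b - a)‖ := Padic.nonarchimedean _ _
          _ = max ‖b‖ ‖b - a‖ := by rw [norm_neg]
      rcases max_cases ‖b‖ ‖b - a‖ with ⟨hm, _⟩ | ⟨hm, _⟩ <;> rw [hm] at h2 <;> linarith
  -- define c = b / a, an element of ℤ_p of norm 1
  have hc_norm : ‖b * a⁻¹‖ = 1 := by
    rw [norm_mul, norm_inv, ← hnorm_eq]
    field_simp
  set C : ℤ_[p] := ⟨b * a⁻¹, le_of_eq hc_norm⟩ with hC_def
  have hC_coe : (C : ℚ_[p]) = b * a⁻¹ := rfl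
  have hC1 : ‖C - 1‖ < 1 := by
    have : ((C - 1 : ℤ_[p]) : ℚ_[p]) = (b - a) * a⁻¹ := by
      push_cast [hC_coe]
      field_simp
    rw [PadicInt.norm_def, this, norm_mul, norm_inv]
    calc ‖b - a‖ * ‖a‖⁻¹ ≤ (‖a‖ * ‖b‖) * ‖a‖⁻¹ := by gcongr
      _ = ‖b‖ := by field_simp
      _ < 1 := hnb1
  -- ‖2‖ = 1 in ℤ_[p]
  have h2norm : ‖(2 : ℤ_[p])‖ = 1 := by
    rcases lt_or_eq_of_le (PadicInt.norm_le_one (2 : ℤ_[p])) with h2 | h2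
    · exfalso
      have h2' : ‖((2 : ℤ) : ℤ_[p])‖ < 1 := by push_cast; exact h2
      have hdvd : (p : ℤ) ∣ 2 := (PadicInt.norm_int_lt_one_iff_dvd 2).mp h2'
      have : p ∣ 2 := by exact_mod_cast hdvd
      have hp2 : p = 2 := ((Nat.prime_dvd_prime_iff_eq hpprime Nat.prime_two).mp this)
      rw [hp2] at hp
      exact (Nat.not_odd_iff_even.mpr (by norm_num)) hp
    · exact h2
  -- Hensel's lemma for X^2 - C at 1
  set F : Polynomial ℤ_[p] := Polynomial.X ^ 2 - Polynomial.C C with hF_def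
  have hF_eval : ∀ z : ℤ_[p], F.eval z = z ^ 2 - C := by intro z; simp [hF_def]
  have hF_deriv : F.derivative = Polynomial.C 2 * Polynomial.X := by
    simp [hF_def, Polynomial.derivative_pow]
  have hhyp : ‖F.eval 1‖ < ‖F.derivative.eval 1‖ ^ 2 := by
    rw [hF_eval, hF_deriv]
    simp only [Polynomial.eval_mul, Polynomial.eval_C, Polynomial.eval_X, mul_one, one_pow]
    have hswap : ‖(1 : ℤ_[p]) - C‖ = ‖C - 1‖ := by rw [← norm_neg]; ring_nf
    rw [hswap, h2norm]
    simpa using hC1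
  obtain ⟨z, hz, -, -, -⟩ := hensels_lemma hhyp
  rw [Polynomial.coe_aeval_eq_eval, hF_eval] at hz
  have hzsq : z ^ 2 = C := by linear_combination hz
  -- z is a unit
  have hz1 : ‖z‖ = 1 := by
    have hCn : ‖C‖ = 1 := by rw [PadicInt.norm_def, hC_coe]; exact hc_norm
    have : ‖z‖ ^ 2 = 1 ^ 2 := by
      rw [← norm_pow z 2, hzsq, hCn]; norm_num
    nlinarith [norm_nonneg z, sq_nonneg (‖z‖ - 1), sq_nonneg (‖z‖ + 1)]
  have hu : IsUnit z := PadicInt.isUnit_iff.mpr hz1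
  refine ⟨hu.unit, ?_⟩
  have hcoe : ((hu.unit : ℤ_[p]) : ℤ_[p]) = z := hu.unit_spec
  rw [hcoe]
  -- conclude by injectivity of the coercion into ℚ_p
  have : ((α * z ^ 2 : ℤ_[p]) : ℚ_[p]) = b := by
    push_cast [hzsq, hC_coe]
    field_simp
    exact ha_def.symm
  rw [hb_def] at this
  exact Subtype.coe_injective this.symm
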